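/- (Proposition 2.1(ii).) Under the stated assumptions on u, for every δ > 0 there exist d^δ ∈ (0,∞) with d^δ → ∞ as δ → 0, and a Lipschitz map a^δ : Ḡ → S^{m−1}, such that: (i) for every x ∈ Ḡ, ψ(x,(a^δ(x),0),(−p̄(x),d^δ)) ∈ [−δ, δ]; (ii) sup over x ∈ Ḡ of |a^δ(x) − p̄(x)| → 0 as δ → 0; and (iii) sup over x ∈ Ḡ of |d^δ(a^δ(x) − p̄(x)) − 2q(x)| → 0 as δ → 0, where q(x) = |p(x)|^{−2}(S(x)p(x) − Δ_∞u(x) p(x)). -/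

import Mathlib

open scoped RealInnerProductSpace

noncomputable section

/-- The matrix `S` applied to a vector of Euclidean space. -/
def mv {m : ℕ} (S : Matrix (Fin m) (Fin m) ℝ) (v : EuclideanSpace ℝ (Fin m)) :
    EuclideanSpace ℝ (Fin m) := Matrix.toEuclideanLin S v

/-- φ(a,b,c,d;p,S) = −(1/2)(a−b)ᵀS(a−b) − (c+d)((a+b)·p). -/
def phi {m : ℕ} (a b : EuclideanSpace ℝ (Fin m)) (c d : ℝ)
    (p : EuclideanSpace ℝ (Fin m)) (S : Matrix (Fin m) (Fin m) ℝ) : ℝ :=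
  -(1 / 2) * ⟪a - b, mv S (a - b)⟫ - (c + d) * ⟪a + b, p⟫

/-- H = S^{m−1} × [0,∞). -/
def Hset (m : ℕ) : Set (EuclideanSpace ℝ (Fin m) × ℝ) :=
  {y | ‖y.1‖ = 1 ∧ 0 ≤ y.2}

/-- The infinity-Laplacian quadratic form `Δ_∞ = |p|⁻² pᵀSp` (with `p = Du(x)`,
`S = D²u(x)`). -/
def Dinf {m : ℕ} (p : EuclideanSpace ℝ (Fin m)) (S : Matrix (Fin m) (Fin m) ℝ) : ℝ :=
  (‖p‖ ^ 2)⁻¹ * ⟪p, mv S p⟫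

/-- `h = −2Δ_∞u`. -/
def hfun {m : ℕ} (p : EuclideanSpace ℝ (Fin m)) (S : Matrix (Fin m) (Fin m) ℝ) : ℝ :=
  -2 * Dinf p S

/-- `ψ(x,y,z) = −h(x) + φ(a,b,c,d;p(x),S(x))` for `y = (a,c)`, `z = (b,d)`. -/
def psi {m : ℕ} (p : EuclideanSpace ℝ (Fin m)) (S : Matrix (Fin m) (Fin m) ℝ)
    (y z : EuclideanSpace ℝ (Fin m) × ℝ) : ℝ :=
  -(hfun p S) + phi y.1 z.1 y.2 z.2 p S

/-- `q(x) = |p(x)|⁻²(S(x)p(x) − Δ_∞u(x) p(x))`. -/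
def qfun {m : ℕ} (Du : EuclideanSpace ℝ (Fin m) → EuclideanSpace ℝ (Fin m))
    (S : EuclideanSpace ℝ (Fin m) → Matrix (Fin m) (Fin m) ℝ)
    (x : EuclideanSpace ℝ (Fin m)) : EuclideanSpace ℝ (Fin m) :=
  (‖Du x‖ ^ 2)⁻¹ • (mv (S x) (Du x) - Dinf (Du x) (S x) • Du x)

-- ==================== auxiliary lemmas ====================

lemma normalize_sub_normalize_le {E : Type*} [NormedAddCommGroup E] [NormedSpace ℝ E]
    (x y : E) (hx : x ≠ 0) :
    ‖‖x‖⁻¹ • x - ‖y‖⁻¹ • y‖ ≤ 2 / ‖x‖ * ‖x - y‖ := by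
  have hxn : (0:ℝ) < ‖x‖ := norm_pos_iff.mpr hx
  by_cases hy : y = 0
  · subst hy
    simp only [norm_zero, inv_zero, zero_smul, sub_zero, norm_smul, norm_inv, norm_norm]
    rw [inv_mul_cancel₀ hxn.ne']
    rw [div_mul_eq_mul_div, le_div_iff₀ hxn]
    nlinarith
  · have hyn : (0:ℝ) < ‖y‖ := norm_pos_iff.mpr hy
    have key : ‖x‖⁻¹ • x - ‖y‖⁻¹ • y = ‖x‖⁻¹ • (x - y) + (‖x‖⁻¹ - ‖y‖⁻¹) • y := by
      module
    rw [key]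
    have h1 : ‖‖x‖⁻¹ • (x - y)‖ = ‖x‖⁻¹ * ‖x - y‖ := by
      rw [norm_smul, norm_inv, norm_norm]
    have h3 : |‖y‖ - ‖x‖| ≤ ‖x - y‖ := by
      rw [abs_sub_comm]
      exact abs_norm_sub_norm_le x y
    have h2 : ‖(‖x‖⁻¹ - ‖y‖⁻¹) • y‖ ≤ ‖x‖⁻¹ * ‖x - y‖ := by
      rw [norm_smul, Real.norm_eq_abs]
      have heq : |‖x‖⁻¹ - ‖y‖⁻¹| * ‖y‖ = |‖y‖ - ‖x‖| / ‖x‖ := by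
        rw [show ‖x‖⁻¹ - ‖y‖⁻¹ = (‖y‖ - ‖x‖) / (‖x‖ * ‖y‖) by field_simp,
          abs_div, abs_of_pos (mul_pos hxn hyn)]
        field_simp
      rw [heq, div_le_iff₀ hxn]
      calc |‖y‖ - ‖x‖| ≤ ‖x - y‖ := h3
        _ = ‖x‖⁻¹ * ‖x - y‖ * ‖x‖ := by field_simp
    calc ‖_ + _‖ ≤ ‖‖x‖⁻¹ • (x - y)‖ + ‖(‖x‖⁻¹ - ‖y‖⁻¹) • y‖ := norm_add_le _ _
      _ ≤ ‖x‖⁻¹ * ‖x - y‖ + ‖x‖⁻¹ * ‖x - y‖ := by rw [h1]; linarith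
      _ = 2 / ‖x‖ * ‖x - y‖ := by field_simp; ring

/-- Scalar Lipschitz approximation on a compact set via inf-convolution. -/
lemma lipschitz_approx_scalar {α : Type*} [MetricSpace α] {K : Set α}
    (hK : IsCompact K) (hne : K.Nonempty) {f : α → ℝ} (hf : ContinuousOn f K)
    {ε : ℝ} (hε : 0 < ε) :
    ∃ (L : NNReal) (g : α → ℝ), LipschitzWith L g ∧ ∀ x ∈ K, |g x - f x| ≤ ε := by
  haveI : Nonempty K := hne.to_subtype
  obtain ⟨M0, hM0⟩ := hK.exists_bound_of_continuousOn hf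
  set M : ℝ := max M0 0 with hMdef
  have hM : ∀ x ∈ K, |f x| ≤ M := fun x hx => (hM0 x hx).trans (le_max_left _ _)
  have hMnn : 0 ≤ M := le_max_right _ _
  obtain ⟨η, hη, hηf⟩ := Metric.uniformContinuousOn_iff.mp
    (hK.uniformContinuousOn_of_continuous hf) ε hε
  set L : ℝ := 2 * M / η with hLdef
  have hLnn : 0 ≤ L := by positivity
  set g : α → ℝ := fun x => ⨅ y : K, (f y + L * dist x (y : α)) with hgdef
  have hbdd : ∀ x : α, BddBelow (Set.range fun y : K => f y + L * dist x (y : α)) := by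
    intro x
    refine ⟨-M, ?_⟩
    rintro t ⟨y, rfl⟩
    have h1 : -M ≤ f y := (abs_le.mp (hM y y.2)).1
    have h2 : 0 ≤ L * dist x (y : α) := by positivity
    simp only []
    linarith
  have hgle : ∀ x ∈ K, g x ≤ f x := by
    intro x hx
    have := ciInf_le (hbdd x) (⟨x, hx⟩ : K)
    simpa using this
  have hgge : ∀ x ∈ K, f x - ε ≤ g x := by
    intro x hx
    apply le_ciInf
    rintro ⟨y, hy⟩
    simp only []
    rcases lt_or_ge (dist x y) η with hd | hd
    · have hlt := hηf x hx y hy hd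
      rw [Real.dist_eq] at hlt
      have h1 : f x - f y < ε := (le_abs_self _).trans_lt hlt
      have h2 : 0 ≤ L * dist x y := by positivity
      linarith
    · have hx1 := abs_le.mp (hM x hx)
      have hy1 := abs_le.mp (hM y hy)
      have h1 : f x - f y ≤ 2 * M := by linarith [hx1.2, hy1.1]
      have h2 : 2 * M ≤ L * dist x y := by
        rw [hLdef, div_mul_eq_mul_div, le_div_iff₀ hη]
        have : 2 * M * η ≤ 2 * M * dist x y :=
          mul_le_mul_of_nonneg_left hd (by positivity)
        linarith
      linarith
  have key : ∀ a b : α, g a ≤ g b + L * dist a b := by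
    intro a b
    rw [← sub_le_iff_le_add]
    apply le_ciInf
    rintro ⟨y, hy⟩
    have h1 : g a ≤ f y + L * dist a y := ciInf_le (hbdd a) (⟨y, hy⟩ : K)
    have h2 : dist a y ≤ dist a b + dist b y := dist_triangle a b y
    have h3 : L * dist a y ≤ L * dist a b + L * dist b y := by nlinarith
    simp only []
    linarith
  refine ⟨⟨L, hLnn⟩, g, ?_, ?_⟩
  · apply LipschitzWith.of_dist_le_mul
    intro x x'
    rw [Real.dist_eq, abs_le]
    push_cast
    change -(L * dist x x') ≤ g x - g x' ∧ g x - g x' ≤ L * dist x x'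
    constructor
    · have := key x' x; rw [dist_comm x' x] at this; linarith
    · have := key x x'; linarith
  · intro x hx
    rw [abs_le]
    exact ⟨by linarith [hgge x hx], by linarith [hgle x hx]⟩

lemma euclid_norm_le_sum {m : ℕ} (w : EuclideanSpace ℝ (Fin m)) :
    ‖w‖ ≤ ∑ i, |w i| := by
  rw [EuclideanSpace.norm_eq]
  have h1 : ∑ i, ‖w i‖ ^ 2 ≤ (∑ i, |w i|) ^ 2 := by
    simp only [Real.norm_eq_abs]
    exact Finset.sum_sq_le_sq_sum_of_nonneg (fun i _ => abs_nonneg _)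
  calc √(∑ i, ‖w i‖ ^ 2) ≤ √((∑ i, |w i|) ^ 2) := Real.sqrt_le_sqrt h1
    _ = ∑ i, |w i| := Real.sqrt_sq (Finset.sum_nonneg fun i _ => abs_nonneg _)

lemma lipschitz_approx_euclidean {m : ℕ} {α : Type*} [MetricSpace α] {K : Set α}
    (hK : IsCompact K) (hne : K.Nonempty) {f : α → EuclideanSpace ℝ (Fin m)}
    (hf : ContinuousOn f K) {ε : ℝ} (hε : 0 < ε) :
    ∃ (Lg : NNReal) (g : α → EuclideanSpace ℝ (Fin m)), LipschitzWith Lg g ∧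
      ∀ x ∈ K, ‖g x - f x‖ ≤ ε := by
  have hε' : 0 < ε / (m + 1) := by positivity
  have hcomp : ∀ i : Fin m, ContinuousOn (fun x => f x i) K := by
    intro i
    exact (EuclideanSpace.proj i).continuous.comp_continuousOn hf
  choose L g hLip happ using fun i : Fin m =>
    (lipschitz_approx_scalar hK hne (hcomp i) hε' :
      ∃ (L : NNReal) (g : α → ℝ), LipschitzWith L g ∧ ∀ x ∈ K, |g x - f x i| ≤ ε / (m+1))
  classical
  set g' : α → EuclideanSpace ℝ (Fin m) := fun x => WithLp.toLp 2 (fun i => g i x) with hg'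
  have happly : ∀ (x y : α) (i : Fin m), (g' x - g' y) i = g i x - g i y := by
    intro x y i; rfl
  have happly2 : ∀ (x : α) (i : Fin m), (g' x - f x) i = g i x - f x i := by
    intro x i; rfl
  refine ⟨∑ i, L i, g', ?_, ?_⟩
  · apply LipschitzWith.of_dist_le_mul
    intro x y
    rw [dist_eq_norm]
    calc ‖g' x - g' y‖ ≤ ∑ i, |(g' x - g' y) i| := euclid_norm_le_sum _
      _ ≤ ∑ i, (L i : ℝ) * dist x y := by
          apply Finset.sum_le_sum
          intro i _
          rw [happly]
          have := (hLip i).dist_le_mul x y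
          rwa [Real.dist_eq] at this
      _ = (↑(∑ i, L i)) * dist x y := by
          rw [← Finset.sum_mul]; push_cast; ring
  · intro x hx
    calc ‖g' x - f x‖ ≤ ∑ i, |(g' x - f x) i| := euclid_norm_le_sum _
      _ ≤ ∑ _i : Fin m, ε / (m + 1) := by
          apply Finset.sum_le_sum
          intro i _
          rw [happly2]
          exact happ i x hx
      _ ≤ ε := by
          rw [Finset.sum_const, Finset.card_fin, nsmul_eq_mul]
          rw [div_eq_mul_inv]
          have hm1 : (0:ℝ) < (m:ℝ) + 1 := by positivity
          rw [show (m:ℝ) * (ε * ((m:ℝ)+1)⁻¹) = ε * ((m:ℝ) / ((m:ℝ)+1)) by ring]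
          nlinarith [div_le_one_of_le₀ (by linarith : (m:ℝ) ≤ (m:ℝ)+1)
            (by positivity : (0:ℝ) ≤ (m:ℝ)+1)]

lemma exists_unit_lipschitz_approx {m : ℕ} {K : Set (EuclideanSpace ℝ (Fin m))}
    (hK : IsCompact K) (hne : K.Nonempty)
    {f : EuclideanSpace ℝ (Fin m) → EuclideanSpace ℝ (Fin m)}
    (hf : ContinuousOn f K) (hnorm : ∀ x ∈ K, ‖f x‖ = 1) {e : ℝ} (he : 0 < e) :
    ∃ a : EuclideanSpace ℝ (Fin m) → EuclideanSpace ℝ (Fin m),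
      (∃ L : NNReal, LipschitzOnWith L a K) ∧ (∀ x ∈ K, ‖a x‖ = 1) ∧
      ∀ x ∈ K, ‖a x - f x‖ ≤ e := by
  have hε : (0:ℝ) < min (e/4) (1/2) := by positivity
  obtain ⟨Lg, g, hLip, happ⟩ := lipschitz_approx_euclidean hK hne hf hε
  have hglb : ∀ x ∈ K, (1:ℝ)/2 ≤ ‖g x‖ := by
    intro x hx
    have h1 := happ x hx
    have h2 : ‖f x‖ - ‖g x‖ ≤ ‖g x - f x‖ := by
      have := abs_norm_sub_norm_le (g x) (f x)
      cases abs_le.mp this; linarith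
    have h3 : min (e/4) (1/2) ≤ 1/2 := min_le_right _ _
    rw [hnorm x hx] at h2
    linarith
  have hgne : ∀ x ∈ K, g x ≠ 0 := by
    intro x hx h0
    have := hglb x hx
    rw [h0, norm_zero] at this
    linarith
  refine ⟨fun x => ‖g x‖⁻¹ • g x, ⟨4 * Lg, ?_⟩, ?_, ?_⟩
  · rw [lipschitzOnWith_iff_dist_le_mul]
    intro x hx y hy
    rw [dist_eq_norm]
    calc ‖‖g x‖⁻¹ • g x - ‖g y‖⁻¹ • g y‖ ≤ 2 / ‖g x‖ * ‖g x - g y‖ :=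
          normalize_sub_normalize_le _ _ (hgne x hx)
      _ ≤ 4 * ‖g x - g y‖ := by
          apply mul_le_mul_of_nonneg_right _ (norm_nonneg _)
          rw [div_le_iff₀ (by linarith [hglb x hx] : (0:ℝ) < ‖g x‖)]
          nlinarith [hglb x hx]
      _ ≤ 4 * ((Lg : ℝ) * dist x y) := by
          have := hLip.dist_le_mul x y
          rw [← dist_eq_norm]
          nlinarith [dist_nonneg (x := x) (y := y)]
      _ = (↑(4 * Lg)) * dist x y := by push_cast; ring
  · intro x hx
    rw [norm_smul, norm_inv, norm_norm, inv_mul_cancel₀]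
    exact (norm_pos_iff.mpr (hgne x hx)).ne'
  · intro x hx
    have hf1 : ‖f x‖⁻¹ • f x = f x := by rw [hnorm x hx]; simp
    calc ‖‖g x‖⁻¹ • g x - f x‖ = ‖‖g x‖⁻¹ • g x - ‖f x‖⁻¹ • f x‖ := by rw [hf1]
      _ ≤ 2 / ‖g x‖ * ‖g x - f x‖ := normalize_sub_normalize_le _ _ (hgne x hx)
      _ ≤ 4 * (e/4) := by
          have h1 : 2 / ‖g x‖ ≤ 4 := by
            rw [div_le_iff₀ (by linarith [hglb x hx] : (0:ℝ) < ‖g x‖)]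
            nlinarith [hglb x hx]
          have h2 : ‖g x - f x‖ ≤ e/4 := (happ x hx).trans (min_le_left _ _)
          have h3 : (0:ℝ) ≤ 2 / ‖g x‖ := by positivity
          nlinarith [norm_nonneg (g x - f x)]
      _ = e := by ring

lemma one_le_norm_unit_add_smul {E : Type*} [NormedAddCommGroup E] [InnerProductSpace ℝ E]
    (p q : E) (t : ℝ) (hp : p ≠ 0) (hqp : ⟪q, p⟫ = 0) :
    1 ≤ ‖‖p‖⁻¹ • p + t • q‖ := by
  have hnp : 0 < ‖p‖ := norm_pos_iff.mpr hp
  have hpb1 : ‖‖p‖⁻¹ • p‖ = 1 := by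
    rw [norm_smul, norm_inv, norm_norm, inv_mul_cancel₀ hnp.ne']
  have hpq : ⟪p, q⟫ = 0 := by rw [real_inner_comm]; exact hqp
  have hpbq : ⟪‖p‖⁻¹ • p, q⟫ = 0 := by rw [real_inner_smul_left, hpq, mul_zero]
  have h2 : ‖‖p‖⁻¹ • p + t • q‖ ^ 2 = 1 + t ^ 2 * ‖q‖ ^ 2 := by
    rw [norm_add_sq_real, hpb1, real_inner_smul_right, hpbq, norm_smul,
      Real.norm_eq_abs]
    rw [mul_pow, sq_abs]
    ring
  nlinarith [norm_nonneg (‖p‖⁻¹ • p + t • q), sq_nonneg (t * ‖q‖)]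


set_option maxHeartbeats 2000000 in
lemma key_estimates {E : Type*} [NormedAddCommGroup E] [InnerProductSpace ℝ E]
    (T : E →L[ℝ] E) (p q a : E) (t M P Q : ℝ)
    (hp : p ≠ 0) (hqp : ⟪q, p⟫ = 0) (hM : ‖T‖ ≤ M) (hP : ‖p‖ ≤ P) (hQ : ‖q‖ ≤ Q)
    (ht : 0 < t) (ht1 : t ≤ 1) (htQ : t * Q ≤ 1)
    (ha : ‖a‖ = 1)
    (haa : ‖a - ‖‖p‖⁻¹ • p + t • q‖⁻¹ • (‖p‖⁻¹ • p + t • q)‖ ≤ 2 * t ^ 2) :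
    ‖a - ‖p‖⁻¹ • p‖ ≤ t * (2 * Q + 2) ∧
    ‖(2 / t) • (a - ‖p‖⁻¹ • p) - (2 : ℝ) • q‖ ≤ t * (2 * Q ^ 2 + 4) ∧
    |2 * ⟪‖p‖⁻¹ • p, T (‖p‖⁻¹ • p)⟫
        - 1 / 2 * ⟪a + ‖p‖⁻¹ • p, T (a + ‖p‖⁻¹ • p)⟫
        - 2 / t * ⟪a - ‖p‖⁻¹ • p, p⟫|
      ≤ t * (8 * M * Q + 8 * M + P * Q ^ 2 + 4 * P) := by
  have hnp : 0 < ‖p‖ := norm_pos_iff.mpr hp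
  have hQ0 : 0 ≤ Q := le_trans (norm_nonneg q) hQ
  have hM0 : 0 ≤ M := le_trans (norm_nonneg T) hM
  have hP0 : 0 ≤ P := le_trans (norm_nonneg p) hP
  set pb : E := ‖p‖⁻¹ • p with hpbdef
  set v : E := pb + t • q with hvdef
  set nv : ℝ := ‖v‖ with hnvdef
  set astar : E := nv⁻¹ • v with hastardef
  have hpb1 : ‖pb‖ = 1 := by
    rw [hpbdef, norm_smul, norm_inv, norm_norm, inv_mul_cancel₀ hnp.ne']
  have hpq : ⟪p, q⟫ = 0 := by rw [real_inner_comm]; exact hqp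
  have hpbq : ⟪pb, q⟫ = 0 := by rw [hpbdef, real_inner_smul_left, hpq, mul_zero]
  have hpbp : ⟪pb, p⟫ = ‖p‖ := by
    rw [hpbdef, real_inner_smul_left, real_inner_self_eq_norm_sq]
    field_simp
  have hnv2 : nv ^ 2 = 1 + t ^ 2 * ‖q‖ ^ 2 := by
    rw [hnvdef, hvdef, norm_add_sq_real, hpb1, real_inner_smul_right, hpbq, norm_smul,
      Real.norm_eq_abs, abs_of_pos ht]
    ring
  clear_value astar nv v pb
  have hqQ2 : ‖q‖ ^ 2 ≤ Q ^ 2 := by nlinarith [norm_nonneg q]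
  have hnv1 : 1 ≤ nv := by nlinarith [norm_nonneg v, hnvdef ▸ norm_nonneg v]
  have hnvpos : 0 < nv := lt_of_lt_of_le one_pos hnv1
  have hnvub : nv - 1 ≤ t ^ 2 * Q ^ 2 / 2 := by nlinarith [sq_nonneg t]
  have hinv1 : nv⁻¹ ≤ 1 := (inv_le_one₀ hnvpos).mpr hnv1
  have hinv0 : 0 < nv⁻¹ := inv_pos.mpr hnvpos
  have hinvub : 1 - nv⁻¹ ≤ t ^ 2 * Q ^ 2 / 2 := by
    have h1 : 1 - nv⁻¹ = (nv - 1) / nv := by field_simp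
    rw [h1]
    exact le_trans (div_le_self (by linarith) hnv1) hnvub
  have htQ2 : t ^ 2 * Q ^ 2 ≤ t * Q := by
    nlinarith [mul_nonneg (mul_nonneg ht.le hQ0) (sub_nonneg.mpr htQ)]
  have hr : astar - pb = (nv⁻¹ - 1) • pb + (t * nv⁻¹) • q := by
    rw [hastardef, hvdef]; module
  have e1 : |nv⁻¹ - 1| = 1 - nv⁻¹ := by rw [abs_of_nonpos (by linarith)]; ring
  have e2 : |t * nv⁻¹| = t * nv⁻¹ := abs_of_pos (by positivity)
  have htnvq : t * nv⁻¹ * ‖q‖ ≤ t * Q := by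
    have h1 : t * nv⁻¹ ≤ t := by
      have := mul_le_mul_of_nonneg_left hinv1 ht.le
      simpa using this
    exact mul_le_mul h1 hQ (norm_nonneg q) ht.le
  have hrnorm : ‖astar - pb‖ ≤ 2 * t * Q := by
    rw [hr]
    calc ‖(nv⁻¹ - 1) • pb + (t * nv⁻¹) • q‖
        ≤ ‖(nv⁻¹ - 1) • pb‖ + ‖(t * nv⁻¹) • q‖ := norm_add_le _ _
      _ = (1 - nv⁻¹) * 1 + (t * nv⁻¹) * ‖q‖ := by
          rw [norm_smul ((nv⁻¹ : ℝ) - 1) pb, norm_smul (t * nv⁻¹) q, Real.norm_eq_abs,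
            Real.norm_eq_abs, e1, e2, hpb1]
      _ ≤ 2 * t * Q := by nlinarith
  -- conclusion 1
  have hapb : ‖a - pb‖ ≤ t * (2 * Q + 2) := by
    have h1 : a - pb = (a - astar) + (astar - pb) := by module
    rw [h1]
    calc ‖(a - astar) + (astar - pb)‖ ≤ ‖a - astar‖ + ‖astar - pb‖ := norm_add_le _ _
      _ ≤ 2 * t ^ 2 + 2 * t * Q := by linarith
      _ ≤ t * (2 * Q + 2) := by nlinarith
  refine ⟨hapb, ?_, ?_⟩
  -- conclusion 2
  · have hco : (2/t) * (t * nv⁻¹) - 2 = 2 * (nv⁻¹ - 1) := by field_simp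
    have hid : (2 / t) • (astar - pb) - (2 : ℝ) • q
        = ((2/t) * (nv⁻¹ - 1)) • pb + (2 * (nv⁻¹ - 1)) • q := by
      rw [hr, ← hco]; module
    have e3 : |(2/t) * (nv⁻¹ - 1)| = (2/t) * (1 - nv⁻¹) := by
      rw [abs_mul, abs_of_pos (by positivity : (0:ℝ) < 2/t), e1]
    have e4 : |2 * (nv⁻¹ - 1)| = 2 * (1 - nv⁻¹) := by
      rw [abs_mul, abs_of_pos (by norm_num : (0:ℝ) < 2), e1]
    have hCstar : ‖(2 / t) • (astar - pb) - (2 : ℝ) • q‖ ≤ 2 * t * Q ^ 2 := by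
      rw [hid]
      calc ‖((2/t) * (nv⁻¹ - 1)) • pb + (2 * (nv⁻¹ - 1)) • q‖
          ≤ ‖((2/t) * (nv⁻¹ - 1)) • pb‖ + ‖(2 * (nv⁻¹ - 1)) • q‖ := norm_add_le _ _
        _ = (2/t) * (1 - nv⁻¹) * 1 + 2 * (1 - nv⁻¹) * ‖q‖ := by
            rw [norm_smul ((2/t) * (nv⁻¹ - 1)) pb, norm_smul (2 * (nv⁻¹ - 1)) q,
              Real.norm_eq_abs, Real.norm_eq_abs, e3, e4, hpb1]
        _ ≤ (2/t) * (t^2 * Q^2 / 2) + 2 * (t^2 * Q^2 / 2) * Q := by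
            have h2t : (0:ℝ) < 2/t := by positivity
            have hA : (2/t) * (1 - nv⁻¹) * 1 ≤ (2/t) * (t^2*Q^2/2) := by
              have := mul_le_mul_of_nonneg_left hinvub h2t.le
              linarith
            have hB : 2 * (1 - nv⁻¹) * ‖q‖ ≤ 2 * (t^2*Q^2/2) * Q := by
              have h1 : (0:ℝ) ≤ 1 - nv⁻¹ := by linarith
              nlinarith [mul_le_mul hinvub hQ (norm_nonneg q) (by positivity : (0:ℝ) ≤ t^2*Q^2/2)]
            linarith
        _ ≤ 2 * t * Q ^ 2 := by
            have h1 : (2/t) * (t^2 * Q^2 / 2) = t * Q^2 := by field_simp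
            rw [h1]
            nlinarith [mul_nonneg (mul_nonneg ht.le hQ0) (mul_nonneg hQ0 hQ0)]
    have hsplit : (2 / t) • (a - pb) - (2 : ℝ) • q
        = (2 / t) • (a - astar) + ((2 / t) • (astar - pb) - (2 : ℝ) • q) := by module
    rw [hsplit]
    calc ‖_ + _‖ ≤ ‖(2/t) • (a - astar)‖ + ‖(2 / t) • (astar - pb) - (2 : ℝ) • q‖ :=
          norm_add_le _ _
      _ ≤ (2/t) * (2 * t^2) + 2 * t * Q^2 := by
          rw [norm_smul ((2:ℝ)/t) (a - astar), Real.norm_eq_abs,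
            abs_of_pos (by positivity : (0:ℝ) < 2/t)]
          have := mul_le_mul_of_nonneg_left haa (by positivity : (0:ℝ) ≤ 2/t)
          linarith
      _ ≤ t * (2 * Q ^ 2 + 4) := by
          have h1 : (2/t) * (2 * t^2) = 4 * t := by field_simp; ring
          rw [h1]; nlinarith
  -- conclusion 3
  · have hsnorm : ‖a - pb‖ ≤ t * (2 * Q + 2) := hapb
    have hs0 : 0 ≤ ‖a - pb‖ := norm_nonneg _
    have hs4 : ‖a - pb‖ ≤ 4 := by nlinarith
    have hTbound : ∀ u w : E, |⟪u, T w⟫| ≤ M * ‖u‖ * ‖w‖ := by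
      intro u w
      calc |⟪u, T w⟫| ≤ ‖u‖ * ‖T w‖ := abs_real_inner_le_norm u (T w)
        _ ≤ ‖u‖ * (M * ‖w‖) := by
            have h1 := (T.le_opNorm w).trans (mul_le_mul_of_nonneg_right hM (norm_nonneg w))
            exact mul_le_mul_of_nonneg_left h1 (norm_nonneg u)
        _ = M * ‖u‖ * ‖w‖ := by ring
    have hw : a + pb = (2:ℝ) • pb + (a - pb) := by module
    have hexpand : ⟪a + pb, T (a + pb)⟫
        = 4 * ⟪pb, T pb⟫ + 2 * ⟪pb, T (a - pb)⟫ + 2 * ⟪a - pb, T pb⟫ + ⟪a - pb, T (a - pb)⟫ := by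
      rw [hw]
      simp only [map_add, ContinuousLinearMap.map_smul, inner_add_left, inner_add_right,
        real_inner_smul_left, real_inner_smul_right]
      ring
    have hip : ⟪a - pb, p⟫ = (nv⁻¹ - 1) * ‖p‖ + ⟪a - astar, p⟫ := by
      have h1 : a - pb = (astar - pb) + (a - astar) := by module
      rw [h1, inner_add_left, hr, inner_add_left, real_inner_smul_left, real_inner_smul_left,
        hpbp, hqp]
      ring
    have hb1 : |⟪pb, T (a - pb)⟫| ≤ M * (t * (2*Q+2)) := by
      have h := hTbound pb (a - pb)
      rw [hpb1] at h
      have h2 : M * 1 * ‖a - pb‖ ≤ M * (t * (2*Q+2)) := by nlinarith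
      linarith
    have hb2 : |⟪a - pb, T pb⟫| ≤ M * (t * (2*Q+2)) := by
      have h := hTbound (a - pb) pb
      rw [hpb1] at h
      have h2 : M * ‖a - pb‖ * 1 ≤ M * (t * (2*Q+2)) := by nlinarith
      linarith
    have hb3 : |⟪a - pb, T (a - pb)⟫| ≤ M * (t * (2*Q+2)) * 4 := by
      have h := hTbound (a - pb) (a - pb)
      have h2 : M * ‖a - pb‖ * ‖a - pb‖ ≤ M * (t * (2*Q+2)) * 4 := by
        nlinarith [mul_le_mul hsnorm hs4 hs0 (by nlinarith : (0:ℝ) ≤ t * (2*Q+2))]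
      linarith
    have hb4 : |2 / t * ((nv⁻¹ - 1) * ‖p‖)| ≤ t * P * Q^2 := by
      rw [abs_mul, abs_mul, abs_of_pos (by positivity : (0:ℝ) < 2/t),
        abs_of_nonpos (by linarith : nv⁻¹ - 1 ≤ 0), abs_of_pos hnp]
      have h2 : -(nv⁻¹ - 1) * ‖p‖ ≤ (t^2*Q^2/2) * P := by
        nlinarith [mul_le_mul hinvub hP (le_of_lt hnp) (by positivity : (0:ℝ) ≤ t^2*Q^2/2)]
      calc 2/t * (-(nv⁻¹ - 1) * ‖p‖) ≤ (2/t) * ((t^2*Q^2/2) * P) :=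
            mul_le_mul_of_nonneg_left h2 (by positivity)
        _ = t * P * Q^2 := by field_simp
    have hb5 : |2 / t * ⟪a - astar, p⟫| ≤ 4 * t * P := by
      rw [abs_mul, abs_of_pos (by positivity : (0:ℝ) < 2/t)]
      have h1 : |⟪a - astar, p⟫| ≤ 2 * t^2 * P := by
        calc |⟪a - astar, p⟫| ≤ ‖a - astar‖ * ‖p‖ := abs_real_inner_le_norm _ _
          _ ≤ 2 * t^2 * P := by nlinarith [norm_nonneg (a - astar)]
      calc 2/t * |⟪a - astar, p⟫| ≤ 2/t * (2 * t^2 * P) :=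
            mul_le_mul_of_nonneg_left h1 (by positivity)
        _ = 4 * t * P := by field_simp; ring
    have hE : 2 * ⟪pb, T pb⟫ - 1 / 2 * ⟪a + pb, T (a + pb)⟫ - 2 / t * ⟪a - pb, p⟫
        = -⟪pb, T (a - pb)⟫ - ⟪a - pb, T pb⟫ - 1/2 * ⟪a - pb, T (a - pb)⟫
          - 2 / t * ((nv⁻¹ - 1) * ‖p‖) - 2 / t * ⟪a - astar, p⟫ := by
      rw [hexpand, hip]; ring
    rw [hE]
    have t1 := abs_le.mp hb1
    have t2 := abs_le.mp hb2
    have t3 := abs_le.mp hb3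
    have t4 := abs_le.mp hb4
    have t5 := abs_le.mp hb5
    rw [abs_le]
    constructor <;> linarith [t1.1, t1.2, t2.1, t2.2, t3.1, t3.2, t4.1, t4.2, t5.1, t5.2]

set_option maxHeartbeats 2000000 in
/-- Proposition 2.1(ii): for every `δ > 0` there are `d^δ ∈ (0,∞)` with `d^δ → ∞` as
`δ → 0` and Lipschitz maps `a^δ : Ḡ → S^{m−1}` such that
`ψ(x,(a^δ(x),0),(−p̄(x),d^δ)) ∈ [−δ,δ]` on `Ḡ`, `a^δ → p̄` uniformly on `Ḡ`, and
`d^δ(a^δ − p̄) → 2q` uniformly on `Ḡ`, as `δ → 0`. -/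
theorem stmt8 {m : ℕ} (hm : 2 ≤ m)
    (G U : Set (EuclideanSpace ℝ (Fin m))) (hGopen : IsOpen G)
    (hGbdd : Bornology.IsBounded G) (hUopen : IsOpen U) (hGU : closure G ⊆ U)
    (u : EuclideanSpace ℝ (Fin m) → ℝ) (hu : ContDiffOn ℝ 2 u U)
    (Du : EuclideanSpace ℝ (Fin m) → EuclideanSpace ℝ (Fin m))
    (hDu : ∀ x ∈ U, HasGradientAt u (Du x) x)
    (S : EuclideanSpace ℝ (Fin m) → Matrix (Fin m) (Fin m) ℝ)
    (hSsymm : ∀ x ∈ U, (S x).IsSymm)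
    (hS : ∀ x ∈ U, HasFDerivAt Du
      (LinearMap.toContinuousLinearMap (Matrix.toEuclideanLin (S x))) x)
    (hp : ∀ x ∈ closure G, Du x ≠ 0)
    (hh : ∀ x ∈ closure G, hfun (Du x) (S x) ≠ 0)
    :
    ∃ dd : ℝ → ℝ, ∃ aa : ℝ → EuclideanSpace ℝ (Fin m) → EuclideanSpace ℝ (Fin m),
      (∀ δ : ℝ, 0 < δ → 0 < dd δ) ∧
      Filter.Tendsto dd (nhdsWithin 0 (Set.Ioi 0)) Filter.atTop ∧
      (∀ δ : ℝ, 0 < δ → ∃ L : NNReal, LipschitzOnWith L (aa δ) (closure G)) ∧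
      (∀ δ : ℝ, 0 < δ → ∀ x ∈ closure G, ‖aa δ x‖ = 1) ∧
      (∀ δ : ℝ, 0 < δ → ∀ x ∈ closure G,
        psi (Du x) (S x) (aa δ x, 0) (-(‖Du x‖⁻¹ • Du x), dd δ) ∈ Set.Icc (-δ) δ) ∧
      TendstoUniformlyOn (fun (δ : ℝ) (x : EuclideanSpace ℝ (Fin m)) => aa δ x)
        (fun x => ‖Du x‖⁻¹ • Du x) (nhdsWithin 0 (Set.Ioi 0)) (closure G) ∧
      TendstoUniformlyOn
        (fun (δ : ℝ) (x : EuclideanSpace ℝ (Fin m)) => dd δ • (aa δ x - ‖Du x‖⁻¹ • Du x))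
        (fun x => (2 : ℝ) • qfun Du S x) (nhdsWithin 0 (Set.Ioi 0)) (closure G) := by
  classical
  set K : Set (EuclideanSpace ℝ (Fin m)) := closure G with hKdef
  have hK : IsCompact K :=
    Metric.isCompact_of_isClosed_isBounded isClosed_closure hGbdd.closure
  rcases K.eq_empty_or_nonempty with hKe | hne
  · -- empty closure: trivial witnesses
    refine ⟨fun δ => 2 / min δ 1, fun _ _ => 0, ?_, ?_, ?_, ?_, ?_, ?_, ?_⟩
    · intro δ hδ
      have h1 : 0 < min δ 1 := lt_min hδ one_pos
      positivity
    · apply Filter.Tendsto.congr'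
        (f₁ := fun δ : ℝ => 2 * δ⁻¹)
      · filter_upwards [Ioo_mem_nhdsGT_of_mem (Set.mem_Ico.mpr ⟨le_refl (0:ℝ), one_pos⟩)]
          with δ hδ
        rw [min_eq_left hδ.2.le, div_eq_mul_inv]
      · exact tendsto_inv_nhdsGT_zero.const_mul_atTop (by norm_num)
    · intro δ _
      refine ⟨1, ?_⟩
      rw [lipschitzOnWith_iff_dist_le_mul]
      intro x hx
      rw [hKe] at hx
      exact absurd hx (Set.notMem_empty x)
    · intro δ _ x hx
      rw [hKe] at hx
      exact absurd hx (Set.notMem_empty x)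
    · intro δ _ x hx
      rw [hKe] at hx
      exact absurd hx (Set.notMem_empty x)
    · rw [hKe]; exact tendstoUniformlyOn_empty
    · rw [hKe]; exact tendstoUniformlyOn_empty
  · -- main case
    have hKU : K ⊆ U := hGU
    set T : EuclideanSpace ℝ (Fin m) → (EuclideanSpace ℝ (Fin m) →L[ℝ] EuclideanSpace ℝ (Fin m)) :=
      fun x => fderiv ℝ Du x with hTdef
    have hmvT : ∀ x ∈ U, ∀ w, mv (S x) w = T x w := by
      intro x hx w
      rw [hTdef]
      simp only []
      rw [(hS x hx).fderiv]
      rfl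
    have hDuC1 : ContDiffOn ℝ 1 Du U := by
      have h2 : ContDiffOn ℝ 1 (fderiv ℝ u) U := hu.fderiv_of_isOpen hUopen (by norm_num)
      have heq : Set.EqOn Du
          (fun x => (InnerProductSpace.toDual ℝ (EuclideanSpace ℝ (Fin m))).symm
            (fderiv ℝ u x)) U := by
        intro x hx
        have h := (hDu x hx).hasFDerivAt.fderiv
        simp [h]
      exact ContDiffOn.congr
        ((InnerProductSpace.toDual ℝ (EuclideanSpace ℝ (Fin m))).symm.contDiff.comp_contDiffOn h2)
        heq
    have hTcont : ContinuousOn T U :=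
      hDuC1.continuousOn_fderiv_of_isOpen hUopen (by norm_num)
    have hDuK : ContinuousOn Du K := hDuC1.continuousOn.mono hKU
    have hTK : ContinuousOn T K := hTcont.mono hKU
    have hpK : ∀ x ∈ K, Du x ≠ 0 := hp
    have hqp : ∀ x ∈ K, ⟪qfun Du S x, Du x⟫ = 0 := by
      intro x hx
      have hnp : 0 < ‖Du x‖ := norm_pos_iff.mpr (hpK x hx)
      simp only [qfun, Dinf]
      rw [real_inner_smul_left, inner_sub_left, real_inner_smul_left,
        real_inner_self_eq_norm_sq, real_inner_comm (mv (S x) (Du x)) (Du x)]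
      have h2 : (‖Du x‖:ℝ)^2 ≠ 0 := by positivity
      field_simp
      ring
    have hqeq : ∀ x ∈ K, qfun Du S x
        = (‖Du x‖^2)⁻¹ • (T x (Du x) - ((‖Du x‖^2)⁻¹ * ⟪Du x, T x (Du x)⟫) • Du x) := by
      intro x hx
      simp only [qfun, Dinf, hmvT x (hKU hx)]
    have hqK : ContinuousOn (qfun Du S) K := by
      have hTDu : ContinuousOn (fun x => T x (Du x)) K := hTK.clm_apply hDuK
      have hn2 : ContinuousOn (fun x => ((‖Du x‖:ℝ)^2)⁻¹) K := by
        apply ContinuousOn.inv₀ (hDuK.norm.pow 2)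
        intro x hx
        have : 0 < ‖Du x‖ := norm_pos_iff.mpr (hpK x hx)
        exact pow_ne_zero 2 this.ne'
      exact ContinuousOn.congr
        (hn2.smul (hTDu.sub ((hn2.mul (hDuK.inner hTDu)).smul hDuK)))
        (fun x hx => hqeq x hx)
    obtain ⟨M0, hM0⟩ := hK.exists_bound_of_continuousOn hTK
    obtain ⟨P0, hP0⟩ := hK.exists_bound_of_continuousOn hDuK
    obtain ⟨Q0, hQ0⟩ := hK.exists_bound_of_continuousOn hqK
    set M : ℝ := max M0 0 with hMdef
    set P : ℝ := max P0 0 with hPdef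
    set Q : ℝ := max Q0 0 with hQdef
    have hM : ∀ x ∈ K, ‖T x‖ ≤ M := fun x hx => (hM0 x hx).trans (le_max_left _ _)
    have hP : ∀ x ∈ K, ‖Du x‖ ≤ P := fun x hx => (hP0 x hx).trans (le_max_left _ _)
    have hQ : ∀ x ∈ K, ‖qfun Du S x‖ ≤ Q := fun x hx => (hQ0 x hx).trans (le_max_left _ _)
    have hMnn : 0 ≤ M := le_max_right _ _
    have hPnn : 0 ≤ P := le_max_right _ _
    have hQnn : 0 ≤ Q := le_max_right _ _
    set CC : ℝ := 8*M*Q + 8*M + P*Q^2 + 4*P + 2*Q^2 + 2*Q + Q + 10 with hCCdef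
    have hMQ : 0 ≤ M*Q := mul_nonneg hMnn hQnn
    have hPQ2 : 0 ≤ P*Q^2 := mul_nonneg hPnn (sq_nonneg Q)
    have hQ2 : 0 ≤ Q^2 := sq_nonneg Q
    have hCCpos : 0 < CC := by nlinarith
    have hCC1 : 1 ≤ CC := by nlinarith
    have hCCQ : Q ≤ CC := by nlinarith
    have hc1 : 2*Q + 2 ≤ CC := by nlinarith
    have hc2 : 2*Q^2 + 4 ≤ CC := by nlinarith
    have hc3 : 8*M*Q + 8*M + P*Q^2 + 4*P ≤ CC := by nlinarith
    set tt : ℝ → ℝ := fun δ => min δ 1 / CC with httdef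
    have httpos : ∀ δ : ℝ, 0 < δ → 0 < tt δ :=
      fun δ hδ => div_pos (lt_min hδ one_pos) hCCpos
    have httCC : ∀ δ : ℝ, tt δ * CC = min δ 1 :=
      fun δ => div_mul_cancel₀ _ hCCpos.ne'
    have hmin1 : ∀ δ : ℝ, min δ 1 ≤ 1 := fun δ => min_le_right _ _
    have hminδ : ∀ δ : ℝ, min δ 1 ≤ δ := fun δ => min_le_left _ _
    have htt1 : ∀ δ : ℝ, 0 < δ → tt δ ≤ 1 := by
      intro δ hδ
      nlinarith [httCC δ, httpos δ hδ, hmin1 δ, hCC1]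
    have httQ : ∀ δ : ℝ, 0 < δ → tt δ * Q ≤ 1 := by
      intro δ hδ
      nlinarith [httCC δ, httpos δ hδ, hmin1 δ, hCCQ]
    -- the ideal unit vector field
    set Ast : ℝ → EuclideanSpace ℝ (Fin m) → EuclideanSpace ℝ (Fin m) :=
      fun δ x => ‖‖Du x‖⁻¹ • Du x + tt δ • qfun Du S x‖⁻¹ •
        (‖Du x‖⁻¹ • Du x + tt δ • qfun Du S x) with hAstdef
    have hvone : ∀ δ : ℝ, ∀ x ∈ K, 1 ≤ ‖‖Du x‖⁻¹ • Du x + tt δ • qfun Du S x‖ :=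
      fun δ x hx => one_le_norm_unit_add_smul (Du x) (qfun Du S x) (tt δ) (hpK x hx) (hqp x hx)
    have hAstnorm : ∀ δ : ℝ, ∀ x ∈ K, ‖Ast δ x‖ = 1 := by
      intro δ x hx
      have h1 := hvone δ x hx
      rw [hAstdef]
      simp only []
      rw [norm_smul, norm_inv, norm_norm, inv_mul_cancel₀ (by linarith)]
    have hAstcont : ∀ δ : ℝ, ContinuousOn (Ast δ) K := by
      intro δ
      have hv : ContinuousOn (fun x => ‖Du x‖⁻¹ • Du x + tt δ • qfun Du S x) K := by
        apply ContinuousOn.add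
        · exact (hDuK.norm.inv₀
            (fun x hx => (norm_pos_iff.mpr (hpK x hx)).ne')).smul hDuK
        · exact hqK.const_smul (tt δ)
      exact (hv.norm.inv₀ (fun x hx => by linarith [hvone δ x hx])).smul hv
    have hchoice : ∀ δ : ℝ, ∃ a : EuclideanSpace ℝ (Fin m) → EuclideanSpace ℝ (Fin m),
        0 < δ → ((∃ L : NNReal, LipschitzOnWith L a K) ∧ (∀ x ∈ K, ‖a x‖ = 1) ∧
          ∀ x ∈ K, ‖a x - Ast δ x‖ ≤ 2 * (tt δ)^2) := by
      intro δ
      by_cases hδ : 0 < δ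
      · obtain ⟨a, h1, h2, h3⟩ := exists_unit_lipschitz_approx hK hne (hAstcont δ)
          (fun x hx => hAstnorm δ x hx)
          (e := 2 * (tt δ)^2) (by have := httpos δ hδ; positivity)
        exact ⟨a, fun _ => ⟨h1, h2, h3⟩⟩
      · exact ⟨fun _ => 0, fun h => absurd h hδ⟩
    choose aa haa using hchoice
    -- the three quantitative estimates
    have hkey : ∀ δ : ℝ, 0 < δ → ∀ x ∈ K,
        ‖aa δ x - ‖Du x‖⁻¹ • Du x‖ ≤ min δ 1 ∧
        ‖(2 / tt δ) • (aa δ x - ‖Du x‖⁻¹ • Du x) - (2:ℝ) • qfun Du S x‖ ≤ min δ 1 ∧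
        |2 * ⟪‖Du x‖⁻¹ • Du x, T x (‖Du x‖⁻¹ • Du x)⟫
          - 1 / 2 * ⟪aa δ x + ‖Du x‖⁻¹ • Du x, T x (aa δ x + ‖Du x‖⁻¹ • Du x)⟫
          - 2 / tt δ * ⟪aa δ x - ‖Du x‖⁻¹ • Du x, Du x⟫| ≤ min δ 1 := by
      intro δ hδ x hx
      obtain ⟨hL, hnorm1, hclose⟩ := haa δ hδ
      have hclosex : ‖aa δ x
          - ‖‖Du x‖⁻¹ • Du x + tt δ • qfun Du S x‖⁻¹ •
              (‖Du x‖⁻¹ • Du x + tt δ • qfun Du S x)‖ ≤ 2 * (tt δ)^2 := hclose x hx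
      have hk := key_estimates (T x) (Du x) (qfun Du S x) (aa δ x) (tt δ) M P Q
        (hpK x hx) (hqp x hx) (hM x hx) (hP x hx) (hQ x hx)
        (httpos δ hδ) (htt1 δ hδ) (httQ δ hδ) (hnorm1 x hx) hclosex
      have httnn : 0 ≤ tt δ := (httpos δ hδ).le
      refine ⟨hk.1.trans ?_, hk.2.1.trans ?_, hk.2.2.trans ?_⟩
      · nlinarith [mul_le_mul_of_nonneg_left hc1 httnn, httCC δ]
      · nlinarith [mul_le_mul_of_nonneg_left hc2 httnn, httCC δ]
      · nlinarith [mul_le_mul_of_nonneg_left hc3 httnn, httCC δ]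
    -- identification of psi with the estimated expression
    have hpsi : ∀ δ : ℝ, 0 < δ → ∀ x ∈ K,
        psi (Du x) (S x) (aa δ x, 0) (-(‖Du x‖⁻¹ • Du x), 2 / tt δ)
          = 2 * ⟪‖Du x‖⁻¹ • Du x, T x (‖Du x‖⁻¹ • Du x)⟫
            - 1 / 2 * ⟪aa δ x + ‖Du x‖⁻¹ • Du x, T x (aa δ x + ‖Du x‖⁻¹ • Du x)⟫
            - 2 / tt δ * ⟪aa δ x - ‖Du x‖⁻¹ • Du x, Du x⟫ := by
      intro δ hδ x hx
      have hnp : 0 < ‖Du x‖ := norm_pos_iff.mpr (hpK x hx)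
      have hDinfeq : ⟪‖Du x‖⁻¹ • Du x, T x (‖Du x‖⁻¹ • Du x)⟫
          = (‖Du x‖^2)⁻¹ * ⟪Du x, T x (Du x)⟫ := by
        rw [real_inner_smul_left, (T x).map_smul, real_inner_smul_right, sq, mul_inv]
        ring
      simp only [psi, phi, hfun, Dinf, hmvT x (hKU hx)]
      rw [sub_neg_eq_add, ← sub_eq_add_neg, ← hDinfeq]
      ring
    refine ⟨fun δ => 2 / tt δ, aa, ?_, ?_, ?_, ?_, ?_, ?_, ?_⟩
    · intro δ hδ
      have := httpos δ hδ
      positivity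
    · -- tendsto atTop
      apply Filter.Tendsto.congr' (f₁ := fun δ : ℝ => (2 * CC) * δ⁻¹)
      · filter_upwards [Ioo_mem_nhdsGT_of_mem (Set.mem_Ico.mpr ⟨le_refl (0:ℝ), one_pos⟩)]
          with δ hδ
        rw [httdef]
        simp only []
        rw [min_eq_left hδ.2.le, div_div_eq_mul_div, div_eq_mul_inv, mul_comm (2:ℝ) CC]
      · exact tendsto_inv_nhdsGT_zero.const_mul_atTop (by positivity)
    · intro δ hδ
      exact (haa δ hδ).1
    · intro δ hδ x hx
      exact (haa δ hδ).2.1 x hx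
    · intro δ hδ x hx
      have h1 := (hkey δ hδ x hx).2.2
      rw [hpsi δ hδ x hx]
      have h2 := abs_le.mp h1
      exact Set.mem_Icc.mpr ⟨by linarith [hminδ δ], by linarith [hminδ δ]⟩
    · rw [Metric.tendstoUniformlyOn_iff]
      intro ε hε
      filter_upwards [Ioo_mem_nhdsGT_of_mem (Set.mem_Ico.mpr ⟨le_refl (0:ℝ), hε⟩)]
        with δ hδ
      intro x hx
      rw [dist_eq_norm, norm_sub_rev]
      have h1 := (hkey δ hδ.1 x hx).1
      calc ‖aa δ x - ‖Du x‖⁻¹ • Du x‖ ≤ min δ 1 := h1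
        _ ≤ δ := hminδ δ
        _ < ε := hδ.2
    · rw [Metric.tendstoUniformlyOn_iff]
      intro ε hε
      filter_upwards [Ioo_mem_nhdsGT_of_mem (Set.mem_Ico.mpr ⟨le_refl (0:ℝ), hε⟩)]
        with δ hδ
      intro x hx
      rw [dist_eq_norm, norm_sub_rev]
      have h1 := (hkey δ hδ.1 x hx).2.1
      calc ‖(2 / tt δ) • (aa δ x - ‖Du x‖⁻¹ • Du x) - (2:ℝ) • qfun Du S x‖
          ≤ min δ 1 := h1
        _ ≤ δ := hminδ δ
        _ < ε := hδ.2

end
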